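/- If K is a C-close convex set, then K is a closed pseudo-cone, i.e., K is a nonempty closed convex set not containing the origin such that λx ∈ K whenever x ∈ K and λ ≥ 1. -/

import Mathlib

open Set MeasureTheory
open scoped Classical
open scoped RealInnerProductSpace

noncomputable section

abbrev Euc (n : ℕ) := EuclideanSpace ℝ (Fin n)

/-- A (convex) pseudo-cone: nonempty convex set not containing the origin,
closed under multiplication by scalars `≥ 1`. -/
def IsPseudoCone {n : ℕ} (K : Set (Euc n)) : Prop :=
  K.Nonempty ∧ Convex ℝ K ∧ (0 : Euc n) ∉ K ∧
    ∀ x ∈ K, ∀ l : ℝ, 1 ≤ l → l • x ∈ K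

/-- A closed pseudo-cone. -/
def IsClosedPseudoCone {n : ℕ} (K : Set (Euc n)) : Prop :=
  IsClosed K ∧ IsPseudoCone K

/-- The duality `K* = {x : ⟪x,y⟫ ≤ -1 for all y ∈ K}`. -/
def pcDual {n : ℕ} (K : Set (Euc n)) : Set (Euc n) :=
  {x | ∀ y ∈ K, ⟪x, y⟫ ≤ (-1 : ℝ)}

/-- The recession cone `rec K = {x : K + x ⊆ K}`. -/
def recCone {n : ℕ} (K : Set (Euc n)) : Set (Euc n) :=
  {x | ∀ y ∈ K, y + x ∈ K}

/-- `ℝ₊ K = {λ • x : λ ≥ 0, x ∈ K}`. -/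
def posHull {n : ℕ} (K : Set (Euc n)) : Set (Euc n) :=
  {x | ∃ l : ℝ, 0 ≤ l ∧ ∃ y ∈ K, x = l • y}

/-- The polar cone `C° = {x : ⟪x,y⟫ ≤ 0 for all y ∈ C}`. -/
def polarCone {n : ℕ} (C : Set (Euc n)) : Set (Euc n) :=
  {x | ∀ y ∈ C, ⟪x, y⟫ ≤ (0 : ℝ)}

/-- Membership in the class `PC^n`: closed pseudo-cones together with `∅` and `ℝⁿ`. -/
def MemPC {n : ℕ} (K : Set (Euc n)) : Prop :=
  IsClosedPseudoCone K ∨ K = ∅ ∨ K = Set.univ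

/-- The join in `PC^n`. -/
def pcJoin {n : ℕ} (K L : Set (Euc n)) : Set (Euc n) :=
  if (0 : Euc n) ∈ closure (convexHull ℝ (K ∪ L)) then Set.univ
  else closure (convexHull ℝ (K ∪ L))

set_option maxHeartbeats 2000000 in
theorem closedPseudoCone_of_C_close {n : ℕ} (C K : Set (Euc n))
    (hCclosed : IsClosed C) (hCconv : Convex ℝ C)
    (hCcone : ∀ x ∈ C, ∀ l : ℝ, 0 ≤ l → l • x ∈ C)
    (hCpointed : ∀ x ∈ C, -x ∈ C → x = 0)
    (hCint : (interior C).Nonempty)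
    (hKC : K ⊆ C) (hKne : K.Nonempty) (hKcl : IsClosed K) (hKconv : Convex ℝ K)
    (hpos : 0 < volume (C \ K)) (hfin : volume (C \ K) < ⊤) :
    IsClosedPseudoCone K := by
  -- C is closed under addition
  have hadd : ∀ a ∈ C, ∀ b ∈ C, a + b ∈ C := by
    intro a ha b hb
    have h2 : ((1:ℝ)/2) • a + ((1:ℝ)/2) • b ∈ C :=
      hCconv ha hb (by norm_num) (by norm_num) (by norm_num)
    have h3 := hCcone _ h2 2 (by norm_num)
    have : (2:ℝ) • (((1:ℝ)/2) • a + ((1:ℝ)/2) • b) = a + b := by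
      rw [smul_add, smul_smul, smul_smul]; norm_num
    rwa [this] at h3
  -- main recession lemma
  have hrec : ∀ u ∈ C, ∀ y ∈ K, y + u ∈ K := by
    intro u hu y hy
    by_contra hnot
    obtain ⟨f, c, hfK, hfp⟩ := geometric_hahn_banach_closed_point hKconv hKcl hnot
    have hfyu : f (y + u) = f y + f u := map_add f y u
    have hfu : 0 < f u := by
      have h1 : f y < c := hfK y hy
      rw [hfyu] at hfp; linarith
    have hune : u ≠ 0 := by
      intro h; rw [h, map_zero] at hfu; exact lt_irrefl 0 hfu
    have hunorm : 0 < ‖u‖ := norm_pos_iff.2 hune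
    obtain ⟨z, hz⟩ := hCint
    obtain ⟨ε, hε, hball⟩ := Metric.isOpen_iff.1 isOpen_interior z hz
    have hballC : Metric.ball z ε ⊆ C := hball.trans interior_subset
    set p := y + u with hp
    have hpC : p ∈ C := hadd y (hKC hy) u hu
    have hpc : c < f p := hfp
    set M : ℝ := ‖f‖ * (‖z‖ + ε) + 1 with hM
    have hMpos : 0 < M := by positivity
    set t : ℝ := (f p - c) / (2 * M) with ht
    have htpos : 0 < t := div_pos (by linarith) (by linarith)
    set w : Euc n := p + t • z with hw
    set r : ℝ := t * ε with hr
    have hrpos : 0 < r := mul_pos htpos hε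
    -- the base ball is in C with f > c
    have hballw : ∀ x ∈ Metric.ball w r, x ∈ C ∧ c < f x := by
      intro x hx
      rw [Metric.mem_ball, dist_eq_norm] at hx
      have hxw : ‖x - w‖ < t * ε := hx
      have hmem : t⁻¹ • (x - p) ∈ Metric.ball z ε := by
        rw [Metric.mem_ball, dist_eq_norm]
        have : t⁻¹ • (x - p) - z = t⁻¹ • (x - w) := by
          rw [hw]
          match_scalars <;> field_simp
        rw [this, norm_smul, Real.norm_eq_abs, abs_of_pos (inv_pos.2 htpos)]
        calc t⁻¹ * ‖x - w‖ < t⁻¹ * (t * ε) := by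
              exact mul_lt_mul_of_pos_left hxw (inv_pos.2 htpos)
          _ = ε := by field_simp
      have hxpC : x - p ∈ C := by
        have := hCcone _ (hballC hmem) t (le_of_lt htpos)
        rwa [smul_smul, mul_inv_cancel₀ (ne_of_gt htpos), one_smul] at this
      constructor
      · have := hadd p hpC (x - p) hxpC
        rwa [add_sub_cancel] at this
      · -- f x > c
        have hbound : ‖x - p‖ ≤ t * (‖z‖ + ε) := by
          have h1 : ‖x - p‖ ≤ ‖x - w‖ + ‖t • z‖ := by
            have : x - p = (x - w) + t • z := by rw [hw]; abel
            rw [this]; exact norm_add_le _ _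
          have h2 : ‖t • z‖ = t * ‖z‖ := by
            rw [norm_smul, Real.norm_eq_abs, abs_of_pos htpos]
          nlinarith
        have hfb : |f (x - p)| ≤ ‖f‖ * (t * (‖z‖ + ε)) := by
          calc |f (x - p)| ≤ ‖f‖ * ‖x - p‖ := f.le_opNorm _
            _ ≤ ‖f‖ * (t * (‖z‖ + ε)) := by
                exact mul_le_mul_of_nonneg_left hbound (norm_nonneg f)
        have hfx : f x = f p + f (x - p) := by
          rw [← map_add]; congr 1; abel
        have htM : t * M = (f p - c) / 2 := by
          rw [ht]; field_simp
        have : ‖f‖ * (t * (‖z‖ + ε)) ≤ t * M - t := by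
          rw [hM]; ring_nf; nlinarith [norm_nonneg f]
        have habs := abs_le.1 hfb
        rw [hfx]
        nlinarith
    -- the translated balls
    set s : ℝ := (2 * r + 1) / ‖u‖ with hs
    have hspos : 0 < s := div_pos (by linarith) hunorm
    set B : ℕ → Set (Euc n) := fun k => Metric.ball (w + ((k : ℝ) * s) • u) r with hB
    have hBsub : ∀ k, B k ⊆ C \ K := by
      intro k x hx
      have hks : (0:ℝ) ≤ (k : ℝ) * s := mul_nonneg (Nat.cast_nonneg k) (le_of_lt hspos)
      have hxm : x - ((k : ℝ) * s) • u ∈ Metric.ball w r := by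
        rw [Metric.mem_ball, dist_eq_norm]
        rw [hB, Metric.mem_ball, dist_eq_norm] at hx
        have : x - ((k : ℝ) * s) • u - w = x - (w + ((k : ℝ) * s) • u) := by abel
        rw [this]; exact hx
      obtain ⟨hxC', hfx'⟩ := hballw _ hxm
      have hkuC : ((k : ℝ) * s) • u ∈ C := hCcone u hu _ hks
      have hxC : x ∈ C := by
        have := hadd _ hxC' _ hkuC
        rwa [sub_add_cancel] at this
      refine ⟨hxC, ?_⟩
      intro hxK
      have h1 : f x < c := hfK x hxK
      have h2 : f x = f (x - ((k : ℝ) * s) • u) + ((k : ℝ) * s) * f u := by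
        rw [map_sub, f.map_smul, smul_eq_mul]; ring
      nlinarith [mul_nonneg hks (le_of_lt hfu)]
    have hdisj : Pairwise (Function.onFun Disjoint B) := by
      intro i j hij
      apply Metric.ball_disjoint_ball
      rw [dist_eq_norm]
      have : w + ((i : ℝ) * s) • u - (w + ((j : ℝ) * s) • u)
          = (((i : ℝ) - (j : ℝ)) * s) • u := by
        module
      rw [this, norm_smul, Real.norm_eq_abs, abs_mul]
      have h1 : (1:ℝ) ≤ |(i : ℝ) - (j : ℝ)| := by
        have h2 : (1:ℤ) ≤ |(i : ℤ) - (j : ℤ)| :=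
          Int.one_le_abs (sub_ne_zero.2 (by exact_mod_cast hij))
        calc (1:ℝ) = ((1:ℤ):ℝ) := by norm_num
          _ ≤ ((|(i:ℤ)-(j:ℤ)| : ℤ) : ℝ) := by exact_mod_cast h2
          _ = |(i:ℝ)-(j:ℝ)| := by push_cast; ring
      have h4 : |s| = s := abs_of_pos hspos
      have h5 : s * ‖u‖ = 2 * r + 1 := by
        rw [hs]; field_simp
      calc r + r ≤ s * ‖u‖ := by rw [h5]; linarith
        _ = 1 * (s * ‖u‖) := (one_mul _).symm
        _ ≤ |(i : ℝ) - (j : ℝ)| * (s * ‖u‖) := by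
            apply mul_le_mul_of_nonneg_right h1
            positivity
        _ = |(i : ℝ) - (j : ℝ)| * |s| * ‖u‖ := by rw [h4]; ring
    have hvol : volume (⋃ k, B k) = ⊤ := by
      rw [measure_iUnion hdisj (fun k => measurableSet_ball)]
      have hconst : ∀ k, volume (B k) = volume (Metric.ball (0 : Euc n) r) := by
        intro k; exact Measure.addHaar_ball_center volume _ r
      rw [tsum_congr hconst]
      exact ENNReal.tsum_const_eq_top_of_ne_zero
        (ne_of_gt (Metric.measure_ball_pos volume 0 hrpos))
    have hle : volume (⋃ k, B k) ≤ volume (C \ K) :=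
      measure_mono (Set.iUnion_subset hBsub)
    rw [hvol] at hle
    exact absurd (lt_of_le_of_lt hle hfin) (lt_irrefl ⊤)
  -- 0 ∉ K
  have h0 : (0 : Euc n) ∉ K := by
    intro h0K
    have hCK : C ⊆ K := by
      intro x hx
      have := hrec x hx 0 h0K
      rwa [zero_add] at this
    have : C \ K = ∅ := Set.diff_eq_empty.2 hCK
    rw [this, measure_empty] at hpos
    exact lt_irrefl 0 hpos
  -- scaling
  refine ⟨hKcl, hKne, hKconv, h0, ?_⟩
  intro x hx l hl
  have h1 : (l - 1) • x ∈ C := hCcone x (hKC hx) (l - 1) (by linarith)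
  have := hrec _ h1 x hx
  have heq : x + (l - 1) • x = l • x := by
    rw [sub_smul, one_smul]; abel
  rwa [heq] at this
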